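/- Let n ≥ 1, λ_1,…,λ_n pairwise distinct reals, α_1,…,α_n reals, and let y_1,…,y_n, f_1,…,f_n : ℝ × I → ℝ be smooth (I an open interval, 0 ∉ I) satisfying the system (yfx), the system (yft), and the constraint (uy'). Fix k and suppose y_k is nowhere vanishing. Define (the transformation A_k): ỹ_j := y_j for all j, f̃_j := f_j for j ≠ k, f̃_k := f_k − α_k/y_k, α̃_j := α_j for j ≠ k, α̃_k := −α_k. Then (ỹ_j, f̃_j) satisfy (yfx), (yft) and (uy') with parameters α̃_1,…,α̃_n and the same λ_1,…,λ_n. -/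

import Mathlib

open Set Function

noncomputable section

/-- Partial derivative in the first (space) variable. -/
def pdx (u : ℝ → ℝ → ℝ) : ℝ → ℝ → ℝ := fun x t => deriv (fun x' => u x' t) x

/-- Partial derivative in the second (time) variable. -/
def pdt (u : ℝ → ℝ → ℝ) : ℝ → ℝ → ℝ := fun x t => deriv (fun t' => u x t') t

/-- The constraint (uy'): `u = x/(6t) + (y₁ + ⋯ + yₙ)/(3t)`. -/
def ucon (n : ℕ) (y : Fin n → ℝ → ℝ → ℝ) : ℝ → ℝ → ℝ :=
  fun x t => x / (6*t) + (∑ j, y j x t) / (3*t)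

/-- the transformation `A_k` (`ỹⱼ = yⱼ`, `f̃ⱼ = fⱼ` for `j ≠ k`,
`f̃_k = f_k − α_k/y_k`, `α̃_k = −α_k`) maps solutions of (yfx), (yft), (uy') to solutions. -/
theorem statement14
    (n : ℕ) (hn : 1 ≤ n)
    (lam alp : Fin n → ℝ) (hlam : Function.Injective lam)
    (a b : ℝ) (I : Set ℝ) (hI : I = Set.Ioo a b) (hI0 : (0:ℝ) ∉ I)
    (y f : Fin n → ℝ → ℝ → ℝ)
    (hysmooth : ∀ j, ContDiffOn ℝ (⊤ : ℕ∞) (uncurry (y j)) (univ ×ˢ I))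
    (hfsmooth : ∀ j, ContDiffOn ℝ (⊤ : ℕ∞) (uncurry (f j)) (univ ×ˢ I))
    -- system (yfx)
    (hyfx : ∀ j x t, t ∈ I →
      pdx (y j) x t = 2 * y j x t * f j x t - alp j
      ∧ pdx (f j) x t = ucon n y x t - (f j x t)^2 - lam j)
    -- system (yft)
    (hyft : ∀ j x t, t ∈ I →
      pdt (y j) x t
        = 2 * pdx (ucon n y) x t * y j x t
          - 2 * (ucon n y x t + 2*lam j) * pdx (y j) x t
      ∧ pdt (f j) x t
        = pdx (fun x' t' => pdx (ucon n y) x' t'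
            - 2*(ucon n y x' t' + 2*lam j) * f j x' t') x t)
    (k : Fin n)
    (hykne : ∀ x t, t ∈ I → y k x t ≠ 0)
    -- the transformation A_k
    (ny nf : Fin n → ℝ → ℝ → ℝ) (nalp : Fin n → ℝ)
    (hny : ∀ j, ny j = y j)
    (hnf : ∀ j, j ≠ k → nf j = f j)
    (hnfk : ∀ x t, nf k x t = f k x t - alp k / y k x t)
    (hnalp : ∀ j, j ≠ k → nalp j = alp j) (hnalpk : nalp k = -alp k) :
    -- the transformed data satisfies (yfx), (yft) with (uy')
    (∀ j x t, t ∈ I →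
      pdx (ny j) x t = 2 * ny j x t * nf j x t - nalp j
      ∧ pdx (nf j) x t = ucon n ny x t - (nf j x t)^2 - lam j)
    ∧ (∀ j x t, t ∈ I →
      pdt (ny j) x t
        = 2 * pdx (ucon n ny) x t * ny j x t
          - 2 * (ucon n ny x t + 2*lam j) * pdx (ny j) x t
      ∧ pdt (nf j) x t
        = pdx (fun x' t' => pdx (ucon n ny) x' t'
            - 2*(ucon n ny x' t' + 2*lam j) * nf j x' t') x t) := by
  have hnyE : y = ny := (funext hny).symm
  subst hnyE
  have hnfk' : nf k = fun x t => f k x t - alp k / y k x t :=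
    funext fun x => funext fun t => hnfk x t
  -- basic facts
  have hopen : IsOpen ((univ : Set ℝ) ×ˢ I) := isOpen_univ.prod (hI ▸ isOpen_Ioo)
  have hyx : ∀ j x t, t ∈ I → HasDerivAt (fun x' => y j x' t) (pdx (y j) x t) x := by
    intro j x t ht
    have hD : DifferentiableAt ℝ (uncurry (y j)) (x, t) :=
      ((hysmooth j).contDiffAt (hopen.mem_nhds ⟨trivial, ht⟩)).differentiableAt (by simp)
    have : DifferentiableAt ℝ (fun x' => y j x' t) x :=
      by have := hD.comp x ((differentiableAt_id (𝕜 := ℝ) (x := x)).prodMk (differentiableAt_const (𝕜 := ℝ) t)); exact this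
    exact this.hasDerivAt
  have hfx : ∀ j x t, t ∈ I → HasDerivAt (fun x' => f j x' t) (pdx (f j) x t) x := by
    intro j x t ht
    have hD : DifferentiableAt ℝ (uncurry (f j)) (x, t) :=
      ((hfsmooth j).contDiffAt (hopen.mem_nhds ⟨trivial, ht⟩)).differentiableAt (by simp)
    have : DifferentiableAt ℝ (fun x' => f j x' t) x :=
      by have := hD.comp x ((differentiableAt_id (𝕜 := ℝ) (x := x)).prodMk (differentiableAt_const (𝕜 := ℝ) t)); exact this
    exact this.hasDerivAt
  have hyt : ∀ j x t, t ∈ I → HasDerivAt (fun t' => y j x t') (pdt (y j) x t) t := by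
    intro j x t ht
    have hD : DifferentiableAt ℝ (uncurry (y j)) (x, t) :=
      ((hysmooth j).contDiffAt (hopen.mem_nhds ⟨trivial, ht⟩)).differentiableAt (by simp)
    have : DifferentiableAt ℝ (fun t' => y j x t') t :=
      hD.comp t ((differentiableAt_const x).prodMk differentiableAt_id)
    exact this.hasDerivAt
  have hft : ∀ j x t, t ∈ I → HasDerivAt (fun t' => f j x t') (pdt (f j) x t) t := by
    intro j x t ht
    have hD : DifferentiableAt ℝ (uncurry (f j)) (x, t) :=
      ((hfsmooth j).contDiffAt (hopen.mem_nhds ⟨trivial, ht⟩)).differentiableAt (by simp)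
    have : DifferentiableAt ℝ (fun t' => f j x t') t :=
      hD.comp t ((differentiableAt_const x).prodMk differentiableAt_id)
    exact this.hasDerivAt
  -- x-derivative of u
  have hux : ∀ (x' t : ℝ), t ∈ I → HasDerivAt (fun x'' => ucon n y x'' t)
      (1/(6*t) + (∑ j, pdx (y j) x' t)/(3*t)) x' := by
    intro x' t ht
    have h1 : HasDerivAt (fun x'' : ℝ => x''/(6*t)) (1/(6*t)) x' := by
      simpa using (hasDerivAt_id x').div_const (6*t)
    have h2 : HasDerivAt (fun x'' => (∑ j, y j x'' t)/(3*t))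
        ((∑ j, pdx (y j) x' t)/(3*t)) x' :=
      (HasDerivAt.fun_sum fun j _ => hyx j x' t ht).div_const (3*t)
    exact h1.add h2
  have hU : ∀ (x' t : ℝ), t ∈ I →
      pdx (ucon n y) x' t = 1/(6*t) + (∑ j, pdx (y j) x' t)/(3*t) :=
    fun x' t ht => (hux x' t ht).deriv
  constructor
  · -- system (yfx)
    intro j x t ht
    by_cases hj : j = k
    · subst hj
      have hY := hykne x t ht
      have hy1 := (hyfx j x t ht).1
      have hf1 := (hyfx j x t ht).2
      constructor
      · rw [hnfk', hnalpk, hy1]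
        field_simp
        ring
      · rw [hnfk']
        have hd : HasDerivAt (fun x' => f j x' t - alp j / y j x' t)
            (pdx (f j) x t - (0 * y j x t - alp j * pdx (y j) x t)/(y j x t)^2) x :=
          (hfx j x t ht).sub ((hasDerivAt_const x (alp j)).div (hyx j x t ht) hY)
        have hpd : pdx (fun x t => f j x t - alp j / y j x t) x t
            = pdx (f j) x t - (0 * y j x t - alp j * pdx (y j) x t)/(y j x t)^2 := hd.deriv
        rw [hpd, hy1, hf1]
        field_simp
        ring
    · rw [hnf j hj, hnalp j hj]
      exact hyfx j x t ht
  · -- system (yft)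
    intro j x t ht
    refine ⟨(hyft j x t ht).1, ?_⟩
    by_cases hj : j = k
    · subst hj
      have hY := hykne x t ht
      have hyx1 := (hyfx j x t ht).1
      have hyt1 := (hyft j x t ht).1
      have hft2 := (hyft j x t ht).2
      -- derivative of pdx u in x
      have hpufun : (fun x' => pdx (ucon n y) x' t)
          = (fun x' => 1/(6*t) + (∑ i, (2 * y i x' t * f i x' t - alp i))/(3*t)) := by
        funext x'
        rw [hU x' t ht, Finset.sum_congr rfl fun i _ => (hyfx i x' t ht).1]
      have hpux : HasDerivAt (fun x' => pdx (ucon n y) x' t)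
          ((∑ i, (2 * pdx (y i) x t * f i x t + 2 * y i x t * pdx (f i) x t))/(3*t)) x := by
        rw [hpufun]
        have h2 : HasDerivAt (fun x' => (∑ i, (2 * y i x' t * f i x' t - alp i))/(3*t))
            ((∑ i, (2 * pdx (y i) x t * f i x t + 2 * y i x t * pdx (f i) x t))/(3*t)) x := by
          refine HasDerivAt.div_const ?_ (3*t)
          refine HasDerivAt.fun_sum fun i _ => ?_
          have := (((hyx i x t ht).const_mul 2).mul (hfx i x t ht)).sub_const (alp i)
          exact this
        simpa using h2.const_add (1/(6*t))
      set Dp := (∑ i, (2 * pdx (y i) x t * f i x t + 2 * y i x t * pdx (f i) x t))/(3*t) with hDp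
      have huder : HasDerivAt (fun x' => ucon n y x' t) (pdx (ucon n y) x t) x := by
        rw [hU x t ht]; exact hux x t ht
      -- derivative of G (the untransformed RHS integrand)
      have hG : HasDerivAt (fun x' => pdx (ucon n y) x' t
            - 2*(ucon n y x' t + 2*lam j) * f j x' t)
          (Dp - ((2 * pdx (ucon n y) x t) * f j x t
            + (2*(ucon n y x t + 2*lam j)) * pdx (f j) x t)) x :=
        hpux.sub (((huder.add_const (2*lam j)).const_mul 2).mul (hfx j x t ht))
      -- derivative of the full transformed RHS integrand
      have hH : HasDerivAt (fun x' => pdx (ucon n y) x' t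
            - 2*(ucon n y x' t + 2*lam j) * (f j x' t - alp j / y j x' t))
          (Dp - ((2 * pdx (ucon n y) x t) * (f j x t - alp j / y j x t)
            + (2*(ucon n y x t + 2*lam j)) * (pdx (f j) x t
              - (0 * y j x t - alp j * pdx (y j) x t)/(y j x t)^2))) x :=
        hpux.sub (((huder.add_const (2*lam j)).const_mul 2).mul
          ((hfx j x t ht).sub ((hasDerivAt_const x (alp j)).div (hyx j x t ht) hY)))
      -- time derivative of nf k
      have hnt : HasDerivAt (fun t' => f j x t' - alp j / y j x t')
          (pdt (f j) x t - (0 * y j x t - alp j * pdt (y j) x t)/(y j x t)^2) t :=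
        (hft j x t ht).sub ((hasDerivAt_const t (alp j)).div (hyt j x t ht) hY)
      have hLHS : pdt (nf j) x t
          = pdt (f j) x t - (0 * y j x t - alp j * pdt (y j) x t)/(y j x t)^2 := by
        rw [hnfk']; exact hnt.deriv
      have hRHS : pdx (fun x' t' => pdx (ucon n y) x' t'
            - 2*(ucon n y x' t' + 2*lam j) * nf j x' t') x t
          = Dp - ((2 * pdx (ucon n y) x t) * (f j x t - alp j / y j x t)
            + (2*(ucon n y x t + 2*lam j)) * (pdx (f j) x t
              - (0 * y j x t - alp j * pdx (y j) x t)/(y j x t)^2)) := by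
        rw [hnfk']; exact hH.deriv
      have hGder : pdt (f j) x t
          = Dp - ((2 * pdx (ucon n y) x t) * f j x t
            + (2*(ucon n y x t + 2*lam j)) * pdx (f j) x t) := by
        rw [hft2]; exact hG.deriv
      rw [hLHS, hRHS, hGder, hyt1]
      field_simp
      ring
    · rw [hnf j hj]
      exact (hyft j x t ht).2
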